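/- Let Q ≥ 2 be an integer and let χ, μ, ω, σ ∈ ℝ satisfy 0 ≤ χ ≤ 1, ω ≤ 1−χ, σ > 0, and σ(1−χ−ω) ≥ 2−χ−μ. Define u : ℝ^Q → ℝ by u(x) = (1+|x|²)^{σ/2}. Then there exists a constant C > 0 such that for every x ∈ ℝ^Q, div(∇u/√(1+|∇u|²))(x) ≥ C (1+|x|)^{−μ} u(x)^{ω} |∇u(x)|^{χ} / √(1+|∇u(x)|²). In particular: if μ < 2−χ and ω < 1−χ one may take any σ ≥ (2−χ−μ)/(1−χ−ω), and if μ ≥ 2−χ and ω = 1−χ one may take any σ > 0; in both cases u is an unbounded global solution, showing the sharpness of the assumption ω > 1−χ (respectively μ < 2−χ) in the paper's a-priori estimate for the mean curvature operator. -/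

import Mathlib

open Set Filter Classical

noncomputable section

/-- The divergence of a vector field `V` on `ℝ^Q`: the sum of the partial derivatives
`∂ᵢ Vᵢ`. -/
def divg {Q : ℕ} (V : EuclideanSpace ℝ (Fin Q) → EuclideanSpace ℝ (Fin Q))
    (x : EuclideanSpace ℝ (Fin Q)) : ℝ :=
  ∑ i, fderiv ℝ V x (EuclideanSpace.single i 1) i

open Real
variable {Q : ℕ}
local notation "E" => EuclideanSpace ℝ (Fin Q)

lemma hasGradientAt_u (σ : ℝ) (x : E) :
    HasGradientAt (fun y : E => (1 + ‖y‖^2) ^ (σ/2))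
      ((σ * (1+‖x‖^2) ^ (σ/2 - 1)) • x) x := by
  have hpos : (0:ℝ) < 1 + ‖x‖^2 := by positivity
  have hn : HasFDerivAt (fun y : E => 1 + ‖y‖^2) (2 • (innerSL ℝ x)) x :=
    ((hasStrictFDerivAt_norm_sq x).hasFDerivAt).const_add 1
  have hr : HasDerivAt (fun s : ℝ => s ^ (σ/2)) ((σ/2) * (1+‖x‖^2) ^ (σ/2 - 1)) (1+‖x‖^2) :=
    Real.hasDerivAt_rpow_const (Or.inl hpos.ne')
  have h := hr.comp_hasFDerivAt x hn
  rw [hasGradientAt_iff_hasFDerivAt]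
  refine h.congr_fderiv ?_
  refine ContinuousLinearMap.ext fun y => ?_
  simp only [InnerProductSpace.toDual_apply_apply, ContinuousLinearMap.smul_apply,
    ContinuousLinearMap.smul_apply, innerSL_apply_apply, real_inner_smul_left, smul_eq_mul]
  ring

def Aa (σ t : ℝ) : ℝ := σ * (1+t) ^ (σ/2 - 1)
def Xx (σ t : ℝ) : ℝ := 1 + σ^2 * t * (1+t) ^ (σ - 2)
def phi (σ t : ℝ) : ℝ := Aa σ t * (Real.sqrt (Xx σ t))⁻¹

lemma gradient_u (σ : ℝ) (x : E) :
    gradient (fun y : E => (1 + ‖y‖^2) ^ (σ/2)) x = Aa σ (‖x‖^2) • x :=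
  (hasGradientAt_u σ x).gradient

lemma Aa_pos {σ : ℝ} (hσ : 0 < σ) {t : ℝ} (ht : 0 ≤ t) : 0 < Aa σ t := by
  have : (0:ℝ) < 1 + t := by linarith
  unfold Aa; positivity

lemma norm_gradient_u {σ : ℝ} (hσ : 0 < σ) (x : E) :
    ‖gradient (fun y : E => (1 + ‖y‖^2) ^ (σ/2)) x‖ = Aa σ (‖x‖^2) * ‖x‖ := by
  rw [gradient_u, norm_smul, Real.norm_eq_abs,
    abs_of_pos (Aa_pos hσ (by positivity))]

lemma sq_Aa {σ : ℝ} {t : ℝ} (ht : 0 ≤ t) : (Aa σ t)^2 = σ^2 * (1+t)^(σ-2) := by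
  have hp : (0:ℝ) < 1 + t := by linarith
  rw [Aa, mul_pow, ← Real.rpow_natCast ((1+t)^(σ/2-1)) 2, ← Real.rpow_mul hp.le]
  congr 1
  push_cast; ring

lemma one_add_norm_grad_sq {σ : ℝ} (hσ : 0 < σ) (x : E) :
    1 + ‖gradient (fun y : E => (1 + ‖y‖^2) ^ (σ/2)) x‖^2 = Xx σ (‖x‖^2) := by
  rw [norm_gradient_u hσ, mul_pow, sq_Aa (by positivity : (0:ℝ) ≤ ‖x‖^2), Xx]
  ring

def Aa' (σ t : ℝ) : ℝ := σ * (1 * (σ/2-1) * (1+t)^(σ/2-1-1))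
def Xx' (σ t : ℝ) : ℝ := σ^2 * (1 * ((1+t)^(σ-2)) + t * (1 * (σ-2) * (1+t)^(σ-2-1)))
def dphi (σ t : ℝ) : ℝ := Aa' σ t * (Real.sqrt (Xx σ t))⁻¹ +
  Aa σ t * (-(Xx' σ t / (2 * Real.sqrt (Xx σ t))) / (Real.sqrt (Xx σ t))^2)

lemma onet_pos {t : ℝ} (ht : 0 ≤ t) : (0:ℝ) < 1 + t := by linarith
lemma Xx_pos {σ t : ℝ} (ht : 0 ≤ t) : 0 < Xx σ t := by
  have : 0 ≤ σ^2 * t * (1+t)^(σ-2) := by positivity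
  unfold Xx; linarith

lemma hasDerivAt_phi (σ : ℝ) {t : ℝ} (ht : 0 ≤ t) : HasDerivAt (phi σ) (dphi σ t) t := by
  have h1 : HasDerivAt (fun s : ℝ => 1 + s) 1 t := (hasDerivAt_id t).const_add 1
  have hA : HasDerivAt (Aa σ) (Aa' σ t) t :=
    (h1.rpow_const (Or.inl (onet_pos ht).ne')).const_mul σ
  have h2 : HasDerivAt (fun s : ℝ => s * (1+s)^(σ-2))
      (1 * ((1+t)^(σ-2)) + t * (1 * (σ-2) * (1+t)^(σ-2-1))) t :=
    (hasDerivAt_id t).mul (h1.rpow_const (Or.inl (onet_pos ht).ne'))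
  have hXf : Xx σ = fun s : ℝ => 1 + σ^2 * (s * (1+s)^(σ-2)) := by
    funext s; simp [Xx, mul_assoc]
  have hX : HasDerivAt (Xx σ) (Xx' σ t) t := by
    rw [hXf]; simpa [Xx'] using ((h2.const_mul (σ^2)).const_add 1)
  have hXpos := Xx_pos (σ := σ) ht
  have hs : Real.sqrt (Xx σ t) ≠ 0 := (Real.sqrt_pos.2 hXpos).ne'
  exact hA.mul ((hX.sqrt hXpos.ne').inv hs)

lemma divg_W (σ : ℝ) (x : E) :
    divg (fun y : E => phi σ (‖y‖^2) • y) x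
      = Q * phi σ (‖x‖^2) + 2 * dphi σ (‖x‖^2) * ‖x‖^2 := by
  have hc : HasFDerivAt (fun y : E => phi σ (‖y‖^2))
      ((dphi σ (‖x‖^2)) • (2 • (innerSL ℝ x))) x :=
    (hasDerivAt_phi σ (by positivity)).comp_hasFDerivAt x
      (hasStrictFDerivAt_norm_sq x).hasFDerivAt
  have hW : HasFDerivAt (fun y : E => phi σ (‖y‖^2) • y)
      (phi σ (‖x‖^2) • (ContinuousLinearMap.id ℝ E)
        + ((dphi σ (‖x‖^2)) • (2 • (innerSL ℝ x))).smulRight x) x :=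
    hc.smul (hasFDerivAt_id x)
  rw [divg]
  rw [hW.fderiv]
  have hterm : ∀ i, ((phi σ (‖x‖^2) • (ContinuousLinearMap.id ℝ E)
        + ((dphi σ (‖x‖^2)) • (2 • (innerSL ℝ x))).smulRight x) (EuclideanSpace.single i 1)) i
      = phi σ (‖x‖^2) + 2 * dphi σ (‖x‖^2) * (x i * x i) := by
    intro i
    simp [ContinuousLinearMap.smulRight_apply, real_inner_smul_left,
      PiLp.smul_apply, smul_eq_mul, EuclideanSpace.single_apply, real_inner_comm,
      EuclideanSpace.inner_single_right]
    ring
  rw [Finset.sum_congr rfl (fun i _ => hterm i)]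
  rw [Finset.sum_add_distrib, Finset.sum_const, Finset.card_univ]
  have : ∑ i, 2 * dphi σ (‖x‖^2) * (x i * x i) = 2 * dphi σ (‖x‖^2) * ‖x‖^2 := by
    rw [← Finset.mul_sum]
    congr 1
    rw [← real_inner_self_eq_norm_sq]
    simp only [PiLp.inner_apply, RCLike.inner_apply, conj_trivial]
  rw [this]
  simp [nsmul_eq_mul]

def Nn (Q : ℕ) (σ t : ℝ) : ℝ := Q + (Q+σ-2)*t + (Q-1)*σ^2*t*(1+t)^(σ-1)

set_option maxHeartbeats 1000000 in
lemma ident (Q : ℕ) (σ : ℝ) {t : ℝ} (ht : 0 ≤ t) :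
    (Q:ℝ) * phi σ t + 2 * dphi σ t * t
      = σ * (1+t)^(σ/2-2) * Nn Q σ t / (Xx σ t * Real.sqrt (Xx σ t)) := by
  have hp : (0:ℝ) < 1 + t := onet_pos ht
  have hXpos := Xx_pos (σ := σ) ht
  have hw2 : (1+t)^σ = ((1+t)^(σ/2))^2 := by
    rw [← Real.rpow_natCast ((1+t)^(σ/2)) 2, ← Real.rpow_mul hp.le]
    norm_num
  have h1 : (1+t)^(σ/2-1) = (1+t)^(σ/2)/(1+t) := by
    rw [Real.rpow_sub hp, Real.rpow_one]
  have h2 : (1+t)^(σ/2-1-1) = (1+t)^(σ/2)/(1+t)/(1+t) := by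
    rw [Real.rpow_sub hp, Real.rpow_sub hp, Real.rpow_one]
  have h3 : (1+t)^(σ/2-2) = (1+t)^(σ/2)/(1+t)/(1+t) := by
    rw [show σ/2-2 = σ/2-1-1 by ring]; exact h2
  have h6 : (1+t)^(σ-1) = ((1+t)^(σ/2))^2/(1+t) := by
    rw [Real.rpow_sub hp, Real.rpow_one, hw2]
  have h4 : (1+t)^(σ-2) = ((1+t)^(σ/2))^2/(1+t)/(1+t) := by
    rw [show σ-2 = σ-1-1 by ring, Real.rpow_sub hp, Real.rpow_one, h6]
  have h5 : (1+t)^(σ-2-1) = ((1+t)^(σ/2))^2/(1+t)/(1+t)/(1+t) := by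
    rw [Real.rpow_sub hp (σ-2), Real.rpow_one, h4]
  simp only [phi, dphi, Aa, Aa', Xx', Nn, Xx] at hXpos ⊢
  set r := Real.sqrt (1 + σ^2 * t * (1+t)^(σ-2)) with hrdef
  have hr2 : r^2 = 1 + σ^2 * t * (1+t)^(σ-2) := Real.sq_sqrt hXpos.le
  have hrpos : 0 < r := Real.sqrt_pos.2 hXpos
  have hne : (1+t) ≠ 0 := hp.ne'
  have hrne : r ≠ 0 := hrpos.ne'
  have hXne : (1 + σ^2 * t * (1+t)^(σ-2)) ≠ 0 := hXpos.ne'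
  have e1 : r⁻¹ = r / (1 + σ^2 * t * (1+t)^(σ-2)) := by
    rw [← hr2, sq]; field_simp
  have e2 : ∀ a : ℝ, a / (2*r) = a * r / (2*(1 + σ^2 * t * (1+t)^(σ-2))) := by
    intro a; rw [← hr2, sq]; field_simp
  have e3 : ∀ a : ℝ, a / ((1 + σ^2 * t * (1+t)^(σ-2)) * r)
      = a * r / ((1 + σ^2 * t * (1+t)^(σ-2)) * (1 + σ^2 * t * (1+t)^(σ-2))) := by
    intro a; rw [← hr2, sq]; field_simp
  rw [e1, e2, e3, hr2, h1, h2, h3, h4, h5, h6]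
  field_simp
  ring

lemma Nn_lower {Q : ℕ} (hQ : 2 ≤ Q) {σ t : ℝ} (hσ : 0 < σ) (ht : 0 ≤ t) :
    min 1 σ * ((1+t) * Xx σ t) ≤ Nn Q σ t := by
  have hp : (0:ℝ) < 1 + t := onet_pos ht
  have hmul : (1+t) * Xx σ t = (1+t) + σ^2*t*(1+t)^(σ-1) := by
    rw [Xx, show σ-1 = σ-2+1 by ring, Real.rpow_add hp, Real.rpow_one]
    ring
  rw [hmul, Nn]
  have hP : 0 ≤ σ^2*t*(1+t)^(σ-1) := by positivity
  have hm1 : min 1 σ ≤ 1 := min_le_left _ _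
  have hm2 : min 1 σ ≤ σ := min_le_right _ _
  have hQ' : (2:ℝ) ≤ (Q:ℝ) := by exact_mod_cast hQ
  nlinarith [mul_le_mul_of_nonneg_right hm1 hP, mul_le_mul_of_nonneg_right hm2 ht,
    mul_le_mul_of_nonneg_right hQ' hP]

lemma key (Q : ℕ) (hQ : 2 ≤ Q) (χ μ ω σ : ℝ)
    (hχ0 : 0 ≤ χ) (hχ1 : χ ≤ 1) (hω : ω ≤ 1 - χ) (hσ : 0 < σ)
    (hσω : 2 - χ - μ ≤ σ * (1 - χ - ω)) :
    ∃ C : ℝ, 0 < C ∧ ∀ s : ℝ, 0 ≤ s →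
      C * (1+s)^(-μ) * ((1+s^2)^(σ/2))^ω * (Aa σ (s^2) * s)^χ / Real.sqrt (Xx σ (s^2))
        ≤ (Q:ℝ) * phi σ (s^2) + 2 * dphi σ (s^2) * s^2 := by
  have hmin : (0:ℝ) < min 1 σ := lt_min one_pos hσ
  refine ⟨σ * min 1 σ / ((2:ℝ)^(|μ|/2) * σ^χ), by positivity, fun s hs => ?_⟩
  set t := s^2 with htdef
  have ht : 0 ≤ t := sq_nonneg s
  have hp : (0:ℝ) < 1 + t := onet_pos ht
  have hp1 : (1:ℝ) ≤ 1 + t := by linarith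
  have hX := Xx_pos (σ := σ) ht
  have hr : 0 < Real.sqrt (Xx σ t) := Real.sqrt_pos.2 hX
  rw [ident Q σ ht,
    show σ * (1+t)^(σ/2-2) * Nn Q σ t / (Xx σ t * Real.sqrt (Xx σ t))
      = (σ * (1+t)^(σ/2-2) * Nn Q σ t / (Xx σ t)) / Real.sqrt (Xx σ t) from (div_div _ _ _).symm,
    div_le_div_iff_of_pos_right hr]
  -- now: C * (1+s)^(-μ) * ((1+t)^(σ/2))^ω * (Aa σ t * s)^χ ≤ σ*(1+t)^(σ/2-2)*Nn/(Xx)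
  have hA : 0 < Aa σ t := Aa_pos hσ ht
  -- bound pieces
  have hsle : s ≤ (1+t)^((1:ℝ)/2) := by
    rw [← Real.sqrt_eq_rpow]
    exact (Real.le_sqrt hs hp.le).2 (by linarith)
  have hchi : s ^ χ ≤ (1+t)^(χ/2) := by
    calc s ^ χ ≤ ((1+t)^((1:ℝ)/2)) ^ χ := Real.rpow_le_rpow hs hsle hχ0
    _ = (1+t)^(χ/2) := by rw [← Real.rpow_mul hp.le]; norm_num; ring_nf
  have hl : (1+t)^((1:ℝ)/2) ≤ 1 + s := by
    rw [← Real.sqrt_eq_rpow]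
    have h1 : (1+t) ≤ (1+s)^2 := by nlinarith
    calc Real.sqrt (1+t) ≤ Real.sqrt ((1+s)^2) := Real.sqrt_le_sqrt h1
      _ = 1 + s := Real.sqrt_sq (by linarith)
  have hu : 1 + s ≤ (2:ℝ)^((1:ℝ)/2) * (1+t)^((1:ℝ)/2) := by
    rw [← Real.sqrt_eq_rpow, ← Real.sqrt_eq_rpow]
    have h2 : (1+s)^2 ≤ 2*(1+t) := by nlinarith [sq_nonneg (1-s)]
    calc 1 + s = Real.sqrt ((1+s)^2) := (Real.sqrt_sq (by linarith)).symm
      _ ≤ Real.sqrt (2*(1+t)) := Real.sqrt_le_sqrt h2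
      _ = Real.sqrt 2 * Real.sqrt (1+t) := Real.sqrt_mul (by norm_num) _
  have hmu : (1+s)^(-μ) ≤ (2:ℝ)^(|μ|/2) * (1+t)^(-μ/2) := by
    rcases le_or_gt 0 μ with hμ | hμ
    · have h1 : (1+s)^(-μ) ≤ ((1+t)^((1:ℝ)/2))^(-μ) :=
        Real.rpow_le_rpow_of_nonpos (by positivity) hl (by linarith)
      have h2 : ((1+t)^((1:ℝ)/2))^(-μ) = (1+t)^(-μ/2) := by
        rw [← Real.rpow_mul hp.le]; ring_nf
      have h3 : (1:ℝ) ≤ (2:ℝ)^(|μ|/2) := Real.one_le_rpow (by norm_num) (by positivity)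
      calc (1+s)^(-μ) ≤ (1+t)^(-μ/2) := h2 ▸ h1
        _ ≤ (2:ℝ)^(|μ|/2) * (1+t)^(-μ/2) := le_mul_of_one_le_left (by positivity) h3
    · have h1 : (1+s)^(-μ) ≤ ((2:ℝ)^((1:ℝ)/2) * (1+t)^((1:ℝ)/2))^(-μ) :=
        Real.rpow_le_rpow (by linarith) hu (by linarith)
      have h2 : ((2:ℝ)^((1:ℝ)/2) * (1+t)^((1:ℝ)/2))^(-μ)
          = (2:ℝ)^(-μ/2) * (1+t)^(-μ/2) := by
        rw [Real.mul_rpow (by positivity) (by positivity), ← Real.rpow_mul (by norm_num),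
          ← Real.rpow_mul hp.le]
        ring_nf
      have habs : |μ| = -μ := abs_of_neg hμ
      rw [habs]
      calc (1+s)^(-μ) ≤ (2:ℝ)^(-μ/2) * (1+t)^(-μ/2) := h2 ▸ h1
        _ = (2:ℝ)^(-μ/2) * (1+t)^(-μ/2) := rfl
  have hAs : (Aa σ t * s)^χ ≤ σ^χ * (1+t)^((σ/2-1)*χ) * (1+t)^(χ/2) := by
    rw [Real.mul_rpow hA.le hs, Aa, Real.mul_rpow hσ.le (by positivity), ← Real.rpow_mul hp.le]
    exact mul_le_mul_of_nonneg_left hchi (by positivity)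
  have hω' : ((1+t)^(σ/2))^ω = (1+t)^(σ/2*ω) := (Real.rpow_mul hp.le _ _).symm
  set D := σ * min 1 σ / ((2:ℝ)^(|μ|/2) * σ^χ) with hDdef
  have hD : 0 < D := by positivity
  calc D * (1+s)^(-μ) * ((1+t)^(σ/2))^ω * (Aa σ t * s)^χ
      ≤ D * ((2:ℝ)^(|μ|/2) * (1+t)^(-μ/2)) * ((1+t)^(σ/2))^ω
          * (σ^χ * (1+t)^((σ/2-1)*χ) * (1+t)^(χ/2)) := by
        have g1 : 0 ≤ ((1+t)^(σ/2))^ω := by positivity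
        have g2 : 0 ≤ (Aa σ t * s)^χ := by positivity
        apply mul_le_mul _ hAs g2 (by positivity)
        exact mul_le_mul (mul_le_mul_of_nonneg_left hmu hD.le) le_rfl g1 (by positivity)
    _ = (D * (2:ℝ)^(|μ|/2) * σ^χ) * (1+t)^(-μ/2 + σ/2*ω + ((σ/2-1)*χ + χ/2)) := by
        rw [hω', Real.rpow_add hp, Real.rpow_add hp, Real.rpow_add hp]
        ring
    _ ≤ (D * (2:ℝ)^(|μ|/2) * σ^χ) * (1+t)^(σ/2-1) := by
        have hE : -μ/2 + σ/2*ω + ((σ/2-1)*χ + χ/2) ≤ σ/2-1 := by nlinarith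
        exact mul_le_mul_of_nonneg_left (Real.rpow_le_rpow_of_exponent_le hp1 hE)
          (by positivity)
    _ = σ * min 1 σ * (1+t)^(σ/2-1) := by
        rw [hDdef]
        have h2 : ((2:ℝ)^(|μ|/2) : ℝ) ≠ 0 := by positivity
        have h3 : (σ^χ : ℝ) ≠ 0 := by positivity
        field_simp
    _ ≤ σ*(1+t)^(σ/2-2)*Nn Q σ t/(Xx σ t) := by
        rw [le_div_iff₀ hX]
        have h1 : (1+t)^(σ/2-1) = (1+t)^(σ/2-2)*(1+t) := by
          rw [show σ/2-1 = σ/2-2+1 by ring, Real.rpow_add hp, Real.rpow_one]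
        rw [h1]
        calc σ * min 1 σ * ((1+t)^(σ/2-2)*(1+t)) * Xx σ t
            = σ * (1+t)^(σ/2-2) * (min 1 σ * ((1+t) * Xx σ t)) := by ring
          _ ≤ σ * (1+t)^(σ/2-2) * Nn Q σ t :=
              mul_le_mul_of_nonneg_left (Nn_lower hQ hσ ht) (by positivity)

lemma V_eq {σ : ℝ} (hσ : 0 < σ) :
    (fun y : E =>
        (Real.sqrt (1 + ‖gradient (fun z : E => (1 + ‖z‖^2) ^ (σ/2)) y‖^2))⁻¹
          • gradient (fun z : E => (1 + ‖z‖^2) ^ (σ/2)) y)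
      = fun y : E => phi σ (‖y‖^2) • y := by
  funext y
  rw [one_add_norm_grad_sq hσ y, gradient_u σ y, smul_smul, phi, mul_comm]


/-- Sharpness of the Keller–Osserman exponent for the mean curvature operator:
for `0 ≤ χ ≤ 1`, `ω ≤ 1−χ`, `σ > 0` with `σ(1−χ−ω) ≥ 2−χ−μ`, the unbounded function
`u(x) = (1+|x|²)^{σ/2}` on `ℝ^Q`, `Q ≥ 2`, satisfies
`div(∇u/√(1+|∇u|²)) ≥ C(1+|x|)^{−μ} u^ω |∇u|^χ/√(1+|∇u|²)` for some `C > 0`. -/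
theorem statement15 (Q : ℕ) (hQ : 2 ≤ Q) (χ μ ω σ : ℝ)
    (hχ0 : 0 ≤ χ) (hχ1 : χ ≤ 1) (hω : ω ≤ 1 - χ) (hσ : 0 < σ)
    (hσω : 2 - χ - μ ≤ σ * (1 - χ - ω)) :
    ∃ C : ℝ, 0 < C ∧ ∀ x : EuclideanSpace ℝ (Fin Q),
      C * (1 + ‖x‖) ^ (-μ) * ((1 + ‖x‖ ^ 2) ^ (σ / 2)) ^ ω *
        ‖gradient (fun y : EuclideanSpace ℝ (Fin Q) => (1 + ‖y‖ ^ 2) ^ (σ / 2)) x‖ ^ χ /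
        Real.sqrt (1 + ‖gradient
          (fun y : EuclideanSpace ℝ (Fin Q) => (1 + ‖y‖ ^ 2) ^ (σ / 2)) x‖ ^ 2)
      ≤ divg (fun y : EuclideanSpace ℝ (Fin Q) =>
          (Real.sqrt (1 + ‖gradient
            (fun z : EuclideanSpace ℝ (Fin Q) => (1 + ‖z‖ ^ 2) ^ (σ / 2)) y‖ ^ 2))⁻¹
          • gradient (fun z : EuclideanSpace ℝ (Fin Q) => (1 + ‖z‖ ^ 2) ^ (σ / 2)) y) x := by
  obtain ⟨C, hC, hkey⟩ := key Q hQ χ μ ω σ hχ0 hχ1 hω hσ hσω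
  refine ⟨C, hC, fun x => ?_⟩
  rw [V_eq hσ, divg_W σ x, one_add_norm_grad_sq hσ x, norm_gradient_u hσ x]
  exact hkey ‖x‖ (norm_nonneg x)
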